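/- arXiv:1905.13571 — 6 statements merged into one kernel-verified Lean document; each statement's English description precedes it below -/
import Mathlib

section
/- Let A be a Poisson algebra over a field F of characteristic zero, and let N(A) = {a ∈ A : a is nilpotent} be the nilradical of the associative commutative algebra A. Then {N(A), A} ⊆ N(A), i.e., N(A) is a Poisson ideal of A. -/
/-- A Poisson bracket on a commutative `F`-algebra `A`: an `F`-bilinear map
`{,} : A × A → A` making `(A, {,})` a Lie algebra and satisfying the Leibniz
rule `{ab, c} = a{b,c} + {a,c}b`. -/
structure PoissonBracket (F : Type*) (A : Type*) [Field F] [CommRing A] [Algebra F A] where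
  br : A →ₗ[F] A →ₗ[F] A
  br_self : ∀ a : A, br a a = 0
  jacobi : ∀ a b c : A, br a (br b c) + br b (br c a) + br c (br a b) = 0
  leibniz : ∀ a b c : A, br (a * b) c = a * br b c + br a c * b

namespace PoissonBracket

variable {F A : Type*} [Field F] [CommRing A] [Algebra F A]

/-- `{A, A}` : the `F`-linear span of all brackets `{a, b}`, `a, b ∈ A`. -/
def lieSpan (P : PoissonBracket F A) : Submodule F A :=
  Submodule.span F {x : A | ∃ a b : A, P.br a b = x}

/-- `{M, N}` : the `F`-linear span of all brackets `{u, v}`, `u ∈ M`, `v ∈ N`. -/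
def brSpan (P : PoissonBracket F A) (M N : Submodule F A) : Submodule F A :=
  Submodule.span F {x : A | ∃ u ∈ M, ∃ v ∈ N, P.br u v = x}

/-- `U` is an ideal of the Lie algebra `{A, A}`. -/
def IsLieIdealOfBrackets (P : PoissonBracket F A) (U : Submodule F A) : Prop :=
  U ≤ P.lieSpan ∧ ∀ x ∈ P.lieSpan, ∀ u ∈ U, P.br x u ∈ U

/-- The derived series `U^[0] = U`, `U^[i+1] = {U^[i], U^[i]}`. -/
def derived (P : PoissonBracket F A) (U : Submodule F A) : ℕ → Submodule F A
  | 0 => U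
  | (i + 1) => P.brSpan (P.derived U i) (P.derived U i)

/-- `A` is a simple Poisson algebra: it has no Poisson ideals other than `(0)` and `A`. -/
def IsSimple (P : PoissonBracket F A) : Prop :=
  ∀ I : Ideal A, (∀ a ∈ I, ∀ b : A, P.br a b ∈ I) → I = ⊥ ∨ I = ⊤

/-- The Poisson center `Z = {a ∈ A | {a, A} = (0)}`. -/
def pCenter (P : PoissonBracket F A) : Submodule F A where
  carrier := {a : A | ∀ b : A, P.br a b = 0}
  add_mem' := by
    intro x y hx hy b
    simp [map_add, hx b, hy b]
  zero_mem' := by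
    intro b
    simp
  smul_mem' := by
    intro c x hx b
    simp [map_smul, hx b]

end PoissonBracket

variable {F A : Type*} [Field F] [CommRing A] [Algebra F A]

open PoissonBracket

/-- The nilradical `N(A)` of a Poisson algebra over a field of characteristic zero
is a Poisson ideal: `{N(A), A} ⊆ N(A)`. -/
theorem nilradical_poisson_ideal [CharZero F]
    (P : PoissonBracket F A) :
    ∀ a b : A, IsNilpotent a → IsNilpotent (P.br a b) := by
  intro a b ⟨n, hn⟩
  let D : Derivation F A A :=
  { toLinearMap := P.br.flip b
    map_one_eq_zero' := by
      have h := P.leibniz 1 1 b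
      simp only [one_mul, mul_one] at h
      have : P.br 1 b = 0 := by linear_combination -h
      simpa [LinearMap.flip_apply] using this
    leibniz' := fun x y => by
      have h := P.leibniz x y b
      simp only [LinearMap.flip_apply, smul_eq_mul]
      linear_combination h }
  have hDa : D a = P.br a b := rfl
  set c := P.br a b with hc
  suffices h : ∀ k, k ≤ n → a ^ (n - k) * c ^ (2 * k + 1) = 0 by
    refine ⟨2 * n + 1, ?_⟩
    have := h n le_rfl
    simpa using this
  intro k
  induction k with
  | zero =>
    intro _
    simp [hn]
  | succ k ih =>
    intro hk
    have hk' : k ≤ n := Nat.le_of_succ_le hk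
    have h := ih hk'
    obtain ⟨m, hm⟩ : ∃ m, n - k = m + 1 := ⟨n - (k+1), by omega⟩
    have hm2 : n - (k + 1) = m := by omega
    rw [hm] at h
    have hD := congrArg D h
    rw [map_zero, Derivation.leibniz, Derivation.leibniz_pow, Derivation.leibniz_pow] at hD
    have hD' := congrArg (fun x => c * x) hD
    simp only [smul_eq_mul, mul_zero, mul_add, hDa, nsmul_eq_mul,
      Nat.add_sub_cancel, show 2 * k + 1 - 1 = 2 * k from rfl] at hD'
    push_cast at hD'
    have keyA : (m + 1 : ℕ) • (a ^ m * c ^ (2 * (k + 1) + 1)) = 0 := by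
      rw [nsmul_eq_mul]
      push_cast
      linear_combination hD' - (2 * (k:A) + 1) * D c * h
    rw [← Nat.cast_smul_eq_nsmul F] at keyA
    have hne : ((m + 1 : ℕ) : F) ≠ 0 := by exact_mod_cast Nat.succ_ne_zero m
    have := (smul_eq_zero.mp keyA).resolve_left hne
    rwa [hm2]
end

section
/- Let A be a simple Poisson algebra with identity 1 over a field F of characteristic zero. If I is a nonzero ideal of the associative algebra A such that {I, {A,A}} ⊆ I, then I = A. -/
variable {F A : Type*} [Field F] [CommRing A] [Algebra F A]

open PoissonBracket

lemma PB_antisym (P : PoissonBracket F A) (a b : A) : P.br a b = - P.br b a := by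
  have h := P.br_self (a + b)
  simp only [map_add, LinearMap.add_apply, P.br_self] at h
  linear_combination h

lemma PB_leibniz₂ (P : PoissonBracket F A) (p x y : A) :
    P.br p (x * y) = x * P.br p y + P.br p x * y := by
  have h := P.leibniz x y p
  have e1 := PB_antisym P p (x * y)
  have e2 := PB_antisym P p y
  have e3 := PB_antisym P p x
  linear_combination e1 - h + (-x) * e2 + (-y) * e3

lemma PB_mem_lieSpan (P : PoissonBracket F A) (a b : A) : P.br a b ∈ P.lieSpan :=
  Submodule.subset_span ⟨a, b, rfl⟩

/-- Key identity: for `u ∈ I` with `{u, {A,A}} ⊆ I`, one has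
`{u,e}{a,b} + {e,b}{u,a} ∈ I`. -/
lemma PB_star (P : PoissonBracket F A) (I : Ideal A)
    (hstable : ∀ u ∈ I, ∀ x ∈ P.lieSpan, P.br u x ∈ I)
    (u : A) (hu : u ∈ I) (e a b : A) :
    P.br u e * P.br a b + P.br e b * P.br u a ∈ I := by
  have h1 : P.br u (P.br (e * a) b) ∈ I := hstable u hu _ (PB_mem_lieSpan P _ _)
  have h2 : P.br u (P.br e b) ∈ I := hstable u hu _ (PB_mem_lieSpan P _ _)
  have h3 : P.br u (P.br a b) ∈ I := hstable u hu _ (PB_mem_lieSpan P _ _)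
  have key : P.br u e * P.br a b + P.br e b * P.br u a
      = P.br u (P.br (e * a) b) - P.br u (P.br e b) * a - e * P.br u (P.br a b) := by
    have hl : P.br (e * a) b = e * P.br a b + P.br e b * a := P.leibniz e a b
    rw [hl, map_add, PB_leibniz₂, PB_leibniz₂]
    ring
  rw [key]
  exact I.sub_mem (I.sub_mem h1 (I.mul_mem_right a h2)) (I.mul_mem_left e h3)

/-- **Lemma 3.** Let `A` be a simple Poisson algebra with `1` over a field of
characteristic zero.  If `I` is a nonzero ideal of the associative algebra `A`
with `{I, {A,A}} ⊆ I`, then `I = A`. -/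
theorem ideal_stable_under_brackets_eq_top [CharZero F] [Nontrivial A]
    (P : PoissonBracket F A) (hP : P.IsSimple) (I : Ideal A) (hI : I ≠ ⊥)
    (hstable : ∀ u ∈ I, ∀ x ∈ P.lieSpan, P.br u x ∈ I) : I = ⊤ := by
  by_cases hbr : ∀ a b : A, P.br a b = 0
  · rcases hP I (fun a _ b => by rw [hbr a b]; exact I.zero_mem) with h | h
    · exact absurd h hI
    · exact h
  · push_neg at hbr
    obtain ⟨p, q, hz⟩ := hbr
    set M₂ : Ideal A := Ideal.span {x : A | ∃ a b c : A, P.br (P.br a b) c = x} with hM₂def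
    have hgen : ∀ a b c : A, P.br (P.br a b) c ∈ M₂ :=
      fun a b c => Ideal.subset_span ⟨a, b, c, rfl⟩
    have hM₂P : ∀ m ∈ M₂, ∀ d : A, P.br m d ∈ M₂ := by
      intro m hm d
      let J' : Ideal A :=
        { carrier := {x : A | x ∈ M₂ ∧ ∀ d : A, P.br x d ∈ M₂}
          zero_mem' := ⟨M₂.zero_mem, fun d => by
            rw [map_zero, LinearMap.zero_apply]; exact M₂.zero_mem⟩
          add_mem' := fun hx hy => ⟨M₂.add_mem hx.1 hy.1, fun d => by
            rw [map_add, LinearMap.add_apply]; exact M₂.add_mem (hx.2 d) (hy.2 d)⟩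
          smul_mem' := fun c x hx => by
            refine ⟨?_, ?_⟩
            · rw [smul_eq_mul]; exact M₂.mul_mem_left c hx.1
            · intro d
              rw [smul_eq_mul, P.leibniz]
              exact M₂.add_mem (M₂.mul_mem_left c (hx.2 d))
                (M₂.mul_mem_left (P.br c d) hx.1) }
      have hspan : M₂ ≤ J' := by
        rw [hM₂def]
        refine Ideal.span_le.mpr ?_
        rintro x ⟨a, b, c, rfl⟩
        exact ⟨hgen a b c, fun d => hgen (P.br a b) c d⟩
      exact (hspan hm).2 d
    rcases hP M₂ hM₂P with hM | hM
    · -- `M₂ = ⊥` : all double brackets vanish; derive a contradiction.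
      exfalso
      have hall : ∀ a b c : A, P.br (P.br a b) c = 0 := by
        intro a b c
        have h := hgen a b c
        rw [hM] at h
        simpa using h
      set z := P.br p q with hzdef
      have hzz : z * z = 0 := by
        have e2 : P.br (p * z) q = z * z := by
          rw [P.leibniz p z q, show P.br z q = 0 from hall p q q]
          ring
        have e3 : p * z = (2⁻¹ : F) • P.br (p * p) q := by
          rw [P.leibniz p p q, show p * P.br p q + P.br p q * p = (2 : F) • (p * z) from by
            rw [two_smul]; ring, smul_smul]
          norm_num
        calc z * z = P.br (p * z) q := e2.symm
          _ = P.br ((2⁻¹ : F) • P.br (p * p) q) q := by rw [← e3]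
          _ = (2⁻¹ : F) • P.br (P.br (p * p) q) q := by rw [map_smul, LinearMap.smul_apply]
          _ = 0 := by rw [hall]; simp
      have hzP : ∀ m ∈ Ideal.span {z}, ∀ d : A, P.br m d ∈ Ideal.span {z} := by
        intro m hm d
        obtain ⟨r, hr⟩ := Ideal.mem_span_singleton'.mp hm
        rw [← hr, P.leibniz, show P.br z d = 0 from hall p q d, mul_zero, zero_add]
        exact Ideal.mem_span_singleton'.mpr ⟨P.br r d, rfl⟩
      rcases hP _ hzP with h | h
      · have hzm : z ∈ Ideal.span {z} := Ideal.subset_span rfl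
        rw [h] at hzm
        exact hz (by simpa using hzm)
      · have h1 : (1 : A) ∈ Ideal.span {z} := h ▸ Submodule.mem_top
        obtain ⟨e, he⟩ := Ideal.mem_span_singleton'.mp h1
        have hcontra : (1 : A) = 0 := by
          calc (1 : A) = (e * z) * (e * z) := by rw [he]; ring
            _ = (e * e) * (z * z) := by ring
            _ = 0 := by rw [hzz, mul_zero]
        exact one_ne_zero hcontra
    · -- `M₂ = ⊤` : show `{I, A} ⊆ I`, so `I` is a Poisson ideal, hence `I = ⊤`.
      have hbrI : ∀ u ∈ I, ∀ a : A, P.br u a ∈ I := by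
        intro u hu a
        let J : Ideal A :=
          { carrier := {m : A | P.br u a * m ∈ I}
            zero_mem' := by
              show P.br u a * 0 ∈ I
              rw [mul_zero]; exact I.zero_mem
            add_mem' := fun {x y} hx hy => by
              show P.br u a * (x + y) ∈ I
              rw [mul_add]; exact I.add_mem hx hy
            smul_mem' := fun c x hx => by
              show P.br u a * (c • x) ∈ I
              rw [smul_eq_mul, ← mul_assoc, mul_comm (P.br u a) c, mul_assoc]
              exact I.mul_mem_left c hx }
        have hSJ : M₂ ≤ J := by
          rw [hM₂def]
          refine Ideal.span_le.mpr ?_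
          rintro x ⟨b, c, d, rfl⟩
          have hst := PB_star P I hstable u hu a (P.br b c) d
          have h2 : P.br a d * P.br u (P.br b c) ∈ I :=
            I.mul_mem_left _ (hstable u hu _ (PB_mem_lieSpan P b c))
          have h3 := I.sub_mem hst h2
          show P.br u a * P.br (P.br b c) d ∈ I
          simpa using h3
        have h1 : (1 : A) ∈ M₂ := hM ▸ Submodule.mem_top
        have h2 := hSJ h1
        have h3 : P.br u a * 1 ∈ I := h2
        simpa using h3
      rcases hP I hbrI with h | h
      · exact absurd h hI
      · exact h
end

section
/- Let A be a simple Poisson algebra with identity 1 over a field F of characteristic zero, let a ∈ A, and let ad(a) : A → A be the map x ↦ {a,x}. If ad(a)^n = 0 for some n ≥ 1, then ad(a) = 0. -/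
variable {F A : Type*} [Field F] [CommRing A] [Algebra F A]

open PoissonBracket

private lemma cast_cancel (F : Type*) {A : Type*} [Field F] [CommRing A] [Algebra F A]
    [CharZero F] (m : ℕ) (hm : m ≠ 0) (y : A) (h : (m : A) * y = 0) : y = 0 := by
  have hmap : ((m : ℕ) : A) = algebraMap F A ((m : ℕ) : F) :=
    (map_natCast (algebraMap F A) m).symm
  have h2 : algebraMap F A (((m : ℕ) : F))⁻¹ * ((m : A) * y) = 0 := by rw [h, mul_zero]
  rw [hmap, ← mul_assoc, ← map_mul, inv_mul_cancel₀ (by exact_mod_cast hm), map_one,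
    one_mul] at h2
  exact h2

private lemma br_skew (P : PoissonBracket F A) (x y : A) : P.br x y = - P.br y x := by
  have h := P.br_self (x + y)
  simp only [map_add, LinearMap.add_apply, P.br_self] at h
  linear_combination h

private lemma br_deriv (P : PoissonBracket F A) (b x y : A) :
    P.br b (x * y) = x * P.br b y + P.br b x * y := by
  have h1 := P.leibniz x y b
  have h2 := br_skew P b (x * y)
  have h3 := br_skew P y b
  have h4 := br_skew P x b
  linear_combination h2 - h1 - x * h3 - y * h4

private lemma br_one (P : PoissonBracket F A) (b : A) : P.br b 1 = 0 := by
  have h := br_deriv P b 1 1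
  rw [mul_one, one_mul, mul_one] at h
  linear_combination -h

private lemma br_pow (P : PoissonBracket F A) (b x : A) (p : ℕ) :
    P.br b (x ^ (p + 1)) = ((p : A) + 1) * (x ^ p * P.br b x) := by
  induction p with
  | zero => simp
  | succ q ih =>
    rw [pow_succ, br_deriv, ih]
    push_cast
    ring

private lemma br_pow_zero (P : PoissonBracket F A) (b t : A) (ht : P.br b t = 0) (i : ℕ) :
    P.br b (t ^ i) = 0 := by
  cases i with
  | zero => simpa using br_one P b
  | succ q => rw [br_pow, ht, mul_zero, mul_zero]

private lemma iter_formula (P : PoissonBracket F A) (b u t : A)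
    (hu : P.br b u = t) (ht : P.br b t = 0) (j : ℕ) :
    ∀ i, i ≤ j → ((P.br b) ^ i) (u ^ j) = Nat.descFactorial j i • (u ^ (j - i) * t ^ i) := by
  intro i
  induction i with
  | zero => intro _; simp
  | succ q ih =>
    intro hq1
    have hq : q ≤ j := Nat.le_of_succ_le hq1
    set p := j - (q + 1) with hpdef
    have hp : j - q = p + 1 := by omega
    have hstep : ((P.br b) ^ (q + 1)) (u ^ j) = P.br b (((P.br b) ^ q) (u ^ j)) := by
      rw [pow_succ', Module.End.mul_apply]
    rw [hstep, ih hq, map_nsmul, hp, br_deriv, br_pow_zero P b t ht, br_pow, hu,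
      Nat.descFactorial_succ, hp]
    simp only [nsmul_eq_mul]
    push_cast
    ring

private lemma br_nilpotent {F A : Type*} [Field F] [CommRing A] [Algebra F A] [CharZero F]
    (P : PoissonBracket F A) (b x : A) (hx : IsNilpotent x) : IsNilpotent (P.br b x) := by
  obtain ⟨m, hm⟩ := hx
  have key : ∀ k, k ≤ m → x ^ (m - k) * (P.br b x) ^ (2 * k + 1) = 0 := by
    intro k
    induction k with
    | zero =>
      intro _
      rw [Nat.sub_zero, hm, zero_mul]
    | succ q ih =>
      intro hq1
      have hC := ih (Nat.le_of_succ_le hq1)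
      set p := m - (q + 1) with hpdef
      have hp : m - q = p + 1 := by omega
      rw [hp] at hC
      have h1 : P.br b (x ^ (p + 1) * (P.br b x) ^ (2 * q + 1)) = 0 := by
        rw [hC, map_zero]
      rw [br_deriv, br_pow, br_pow] at h1
      have hgoal : ((p : A) + 1) * (x ^ p * (P.br b x) ^ (2 * (q + 1) + 1)) = 0 := by
        have e : 2 * (q + 1) + 1 = 2 * q + 3 := by ring
        rw [e]
        linear_combination (P.br b x) * h1 - (((2 * q : ℕ) : A) + 1) * P.br b (P.br b x) * hC
      have hcast : (((p + 1 : ℕ)) : A) * (x ^ p * (P.br b x) ^ (2 * (q + 1) + 1)) = 0 := by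
        push_cast
        exact hgoal
      exact cast_cancel F (p + 1) (Nat.succ_ne_zero p) _ hcast
  have h := key m le_rfl
  rw [Nat.sub_self, pow_zero, one_mul] at h
  exact ⟨2 * m + 1, h⟩

/-- **Lemma 5.** In a simple Poisson algebra with `1` over a field of characteristic
zero, if `ad(a)^n = 0` for some `n ≥ 1`, then `ad(a) = 0`. -/
theorem ad_nilpotent_eq_zero [CharZero F] [Nontrivial A]
    (P : PoissonBracket F A) (hP : P.IsSimple) (a : A) (n : ℕ) (hn : 1 ≤ n)
    (h : (P.br a) ^ n = 0) : P.br a = 0 := by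
  -- Step 1: the nilradical is a Poisson ideal, so `A` is reduced.
  have hstab : ∀ x ∈ nilradical A, ∀ b : A, P.br x b ∈ nilradical A := by
    intro x hx b
    rw [mem_nilradical] at hx ⊢
    rw [br_skew]
    exact (br_nilpotent P b x hx).neg
  have hnil : nilradical A = ⊥ := by
    rcases hP (nilradical A) hstab with h' | h'
    · exact h'
    · exfalso
      have h1 : (1 : A) ∈ nilradical A := by rw [h']; exact Submodule.mem_top
      obtain ⟨m, hm⟩ := mem_nilradical.mp h1
      rw [one_pow] at hm
      exact one_ne_zero hm
  have hred : ∀ y : A, IsNilpotent y → y = 0 := by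
    intro y hy
    have hmem : y ∈ nilradical A := mem_nilradical.mpr hy
    rw [hnil] at hmem
    simpa using hmem
  -- Step 2: descent.
  have key2 : ∀ m : ℕ, (P.br a) ^ (m + 1) = 0 → P.br a = 0 := by
    intro m
    induction m with
    | zero => intro h'; rw [pow_one] at h'; exact h'
    | succ q ih =>
      intro h'
      apply ih
      apply LinearMap.ext
      intro x
      rw [LinearMap.zero_apply]
      set u := ((P.br a) ^ q) x with hudef
      set t := ((P.br a) ^ (q + 1)) x with htdef
      have hu : P.br a u = t := by
        rw [htdef, pow_succ', Module.End.mul_apply]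
      have ht : P.br a t = 0 := by
        have e : P.br a t = ((P.br a) ^ (q + 1 + 1)) x := by
          rw [pow_succ' (P.br a) (q + 1), Module.End.mul_apply]
        rw [e, h', LinearMap.zero_apply]
      have hiter := iter_formula P a u t hu ht (q + 2) (q + 2) le_rfl
      rw [Nat.sub_self, pow_zero, one_mul, Nat.descFactorial_self] at hiter
      have hz : ((P.br a) ^ (q + 2)) (u ^ (q + 2)) = 0 := by
        have e : ((q : ℕ) + 2 : ℕ) = q + 1 + 1 := rfl
        rw [e, h', LinearMap.zero_apply]
      rw [hz] at hiter
      have hsm : (((Nat.factorial (q + 2)) : ℕ) : A) * t ^ (q + 2) = 0 := by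
        rw [← nsmul_eq_mul, ← hiter]
      have ht0 := cast_cancel F (Nat.factorial (q + 2)) (Nat.factorial_ne_zero _) _ hsm
      exact hred t ⟨q + 2, ht0⟩
  obtain ⟨m, rfl⟩ : ∃ m, n = m + 1 := ⟨n - 1, by omega⟩
  exact key2 m h
end

section
/- Let A be a Poisson algebra over a field F of characteristic zero such that A contains no nonzero nilpotent element. If a ∈ A satisfies ad(a)^n = 0 for some n ≥ 2, then ad(a)^{n-1} = 0, where ad(a) : A → A is the map x ↦ {a,x}. -/
variable {F A : Type*} [Field F] [CommRing A] [Algebra F A]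

open PoissonBracket

/-- Leibniz formula for iterates of a derivation. -/
lemma pow_apply_mul_aux (D : A →ₗ[F] A) (hD : ∀ x y : A, D (x * y) = x * D y + D x * y) :
    ∀ (m : ℕ) (x y : A), (D ^ m) (x * y) =
      ∑ k ∈ Finset.range (m + 1), m.choose k • ((D ^ k) x * (D ^ (m - k)) y) := by
  intro m
  induction m with
  | zero => intro x y; simp
  | succ m ih =>
    intro x y
    have h1 : (D ^ (m + 1)) (x * y) = D ((D ^ m) (x * y)) := by
      rw [pow_succ', Module.End.mul_apply]
    rw [h1, ih, map_sum]
    have h2 : ∀ k ∈ Finset.range (m + 1),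
        D (m.choose k • ((D ^ k) x * (D ^ (m - k)) y)) =
        m.choose k • ((D ^ k) x * (D ^ (m + 1 - k)) y)
          + m.choose k • ((D ^ (k + 1)) x * (D ^ (m - k)) y) := by
      intro k hk
      rw [Finset.mem_range] at hk
      have hk' : k ≤ m := Nat.lt_succ_iff.mp hk
      rw [map_nsmul, hD, smul_add]
      congr 2
      · rw [Nat.succ_sub hk', pow_succ', Module.End.mul_apply]
      · rw [pow_succ', Module.End.mul_apply]
    rw [Finset.sum_congr rfl h2, Finset.sum_add_distrib]
    -- first sum: split off k = 0
    have e1 : ∑ k ∈ Finset.range (m + 1), m.choose k • ((D ^ k) x * (D ^ (m + 1 - k)) y)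
        = (x * (D ^ (m + 1)) y)
          + ∑ k ∈ Finset.range m, m.choose (k + 1) • ((D ^ (k + 1)) x * (D ^ (m - k)) y) := by
      rw [Finset.sum_range_succ']
      simp [add_comm, Nat.succ_sub_succ]
    -- second sum: extend to range (m+1) with a vanishing top term is already fine;
    -- drop the k = m term of e1's sum being implicit; instead extend second sum's index
    have e2 : ∑ k ∈ Finset.range m, m.choose (k + 1) • ((D ^ (k + 1)) x * (D ^ (m - k)) y)
        = ∑ k ∈ Finset.range (m + 1), m.choose (k + 1) • ((D ^ (k + 1)) x * (D ^ (m - k)) y) := by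
      rw [Finset.sum_range_succ, Nat.choose_succ_self, zero_smul, add_zero]
    -- target: split off k = 0
    have e3 : ∑ k ∈ Finset.range (m + 2), (m + 1).choose k • ((D ^ k) x * (D ^ (m + 1 - k)) y)
        = (x * (D ^ (m + 1)) y)
          + ∑ k ∈ Finset.range (m + 1),
              (m + 1).choose (k + 1) • ((D ^ (k + 1)) x * (D ^ (m - k)) y) := by
      rw [Finset.sum_range_succ']
      simp [add_comm, Nat.succ_sub_succ]
    rw [e1, e2, e3, add_assoc, ← Finset.sum_add_distrib]
    congr 1
    refine Finset.sum_congr rfl fun k _ => ?_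
    rw [Nat.choose_succ_succ, add_smul, add_comm]

/-- If a Poisson algebra over a field of characteristic zero has no nonzero
nilpotent elements and `ad(a)^n = 0` for some `n ≥ 2`, then `ad(a)^(n-1) = 0`. -/
theorem ad_nilpotent_descend [CharZero F]
    (P : PoissonBracket F A)
    (hred : ∀ x : A, ∀ m : ℕ, 1 ≤ m → x ^ m = 0 → x = 0)
    (a : A) (n : ℕ) (hn : 2 ≤ n) (h : (P.br a) ^ n = 0) :
    (P.br a) ^ (n - 1) = 0 := by
  set D := P.br a with hDdef
  -- antisymmetry of the bracket
  have antisymm : ∀ u v : A, P.br u v = - P.br v u := by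
    intro u v
    have h0 := P.br_self (u + v)
    simp only [map_add, LinearMap.add_apply, P.br_self, zero_add, add_zero] at h0
    linear_combination h0
  -- D is a derivation
  have hD : ∀ x y : A, D (x * y) = x * D y + D x * y := by
    intro x y
    have h1 := antisymm a (x * y)
    have h2 := P.leibniz x y a
    have h3 := antisymm y a
    have h4 := antisymm x a
    rw [hDdef, h1, h2, h3, h4]
    ring
  -- powers beyond n vanish
  have hpow : ∀ k : ℕ, n ≤ k → (D : A →ₗ[F] A) ^ k = 0 := by
    intro k hk
    obtain ⟨j, rfl⟩ := Nat.exists_eq_add_of_le hk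
    rw [pow_add, h, zero_mul]
  ext x
  simp only [LinearMap.zero_apply]
  set y := (D ^ (n - 1)) x with hy
  -- compute D^(2n-2) (x * x) = 0
  have hm : 2 * n - 2 = (n - 2) + n := by omega
  have hz : (D ^ (2 * n - 2)) (x * x) = 0 := by
    have := hpow (2 * n - 2) (by omega)
    rw [this]; rfl
  rw [pow_apply_mul_aux D hD] at hz
  have hsingle : ∑ k ∈ Finset.range (2 * n - 2 + 1),
      (2 * n - 2).choose k • ((D ^ k) x * (D ^ (2 * n - 2 - k)) x)
      = (2 * n - 2).choose (n - 1) • (y * y) := by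
    rw [Finset.sum_eq_single (n - 1)]
    · have e : 2 * n - 2 - (n - 1) = n - 1 := by omega
      rw [e]
    · intro k hk hne
      rcases le_or_gt n k with hkn | hkn
      · rw [hpow k hkn]
        simp
      · have hkn' : n ≤ 2 * n - 2 - k := by omega
        rw [hpow _ hkn']
        simp
    · intro habs
      exfalso
      apply habs
      rw [Finset.mem_range]
      omega
  rw [hsingle] at hz
  -- the binomial coefficient is nonzero
  have hc : (2 * n - 2).choose (n - 1) ≠ 0 := (Nat.choose_pos (by omega)).ne'
  have hyy : y * y = 0 := by
    have hz' : (((2 * n - 2).choose (n - 1) : F)) • (y * y) = 0 := by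
      rw [Nat.cast_smul_eq_nsmul]; exact hz
    have hcF : (((2 * n - 2).choose (n - 1) : F)) ≠ 0 := by
      exact_mod_cast hc
    exact (smul_eq_zero.mp hz').resolve_left hcF
  exact hred y 2 (by norm_num) (by rw [sq]; exact hyy)
end

section
/- Let A be a simple Poisson algebra with identity 1 over a field F of characteristic zero, and let U be an ideal of the Lie algebra {A,A} such that U^[3] = (0), where U^[0] = U and U^[i+1] = {U^[i], U^[i]}. Then {U,A} = (0). -/
variable {F A : Type*} [Field F] [CommRing A] [Algebra F A]

open PoissonBracket

namespace PoissonBracket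

variable {F A : Type*} [Field F] [CommRing A] [Algebra F A]

lemma br_zero_left (P : PoissonBracket F A) (b : A) : P.br 0 b = 0 := by
  rw [map_zero]; rfl

lemma br_skew (P : PoissonBracket F A) (a b : A) : P.br a b = - P.br b a := by
  have h := P.br_self (a + b)
  simp only [map_add, LinearMap.add_apply, P.br_self, zero_add, add_zero] at h
  exact eq_neg_of_add_eq_zero_left (by linear_combination h)

lemma br_leib' (P : PoissonBracket F A) (c a b : A) :
    P.br c (a * b) = a * P.br c b + P.br c a * b := by
  have h1 : P.br c (a * b) = - P.br (a * b) c := P.br_skew c (a*b)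
  rw [h1, P.leibniz, P.br_skew a c, P.br_skew b c]
  ring

lemma jac' (P : PoissonBracket F A) (a b c : A) :
    P.br a (P.br b c) = P.br (P.br a b) c + P.br b (P.br a c) := by
  have h := P.jacobi a b c
  have h1 : P.br b (P.br c a) = - P.br b (P.br a c) := by
    rw [P.br_skew c a, map_neg]
  have h2 : P.br c (P.br a b) = - P.br (P.br a b) c := P.br_skew c _
  rw [h1, h2] at h
  linear_combination h

lemma nat_cancel [CharZero F] {n : ℕ} (hn : n ≠ 0) {x : A} (h : (n : A) * x = 0) : x = 0 := by
  have h1 : algebraMap F A (n : F) * x = 0 := by rw [map_natCast]; exact h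
  have h2 : algebraMap F A ((n : F)⁻¹) * (algebraMap F A (n : F) * x) = 0 := by
    rw [h1, mul_zero]
  rwa [← mul_assoc, ← map_mul, inv_mul_cancel₀ (by exact_mod_cast hn), map_one, one_mul] at h2

lemma br_pow (P : PoissonBracket F A) (b y : A) :
    ∀ m : ℕ, P.br (y ^ (m + 1)) b = ((m : A) + 1) * y ^ m * P.br y b
  | 0 => by simp
  | (m + 1) => by
      rw [pow_succ, P.leibniz, br_pow P b y m]
      push_cast
      ring

lemma seid [CharZero F] (P : PoissonBracket F A) (b : A) {x : A} (hx : IsNilpotent x) :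
    IsNilpotent (P.br x b) := by
  obtain ⟨n, hn⟩ := hx
  have hn' : x ^ (n + 1) = 0 := by rw [pow_succ, hn, zero_mul]
  have key : ∀ m : ℕ, m ≤ n → x ^ (n - m) * (P.br x b) ^ (2 * m + 1) = 0 := by
    intro m
    induction m with
    | zero =>
      intro _
      have e : P.br (x ^ (n + 1)) b = 0 := by rw [hn']; exact P.br_zero_left b
      rw [P.br_pow] at e
      have e2 : ((n + 1 : ℕ) : A) * (x ^ n * P.br x b) = 0 := by
        push_cast; linear_combination e
      have := nat_cancel (F := F) (Nat.succ_ne_zero n) e2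
      simpa using this
    | succ m ih =>
      intro hm
      have ihm := ih (by omega)
      obtain ⟨s, hs⟩ : ∃ s, n - m = s + 1 := ⟨n - m - 1, by omega⟩
      rw [hs] at ihm
      have e : P.br (x ^ (s + 1) * (P.br x b) ^ (2 * m + 1)) b = 0 := by
        rw [ihm]; exact P.br_zero_left b
      rw [P.leibniz, P.br_pow, P.br_pow] at e
      have e2 : ((s + 1 : ℕ) : A) * (x ^ s * (P.br x b) ^ (2 * (m + 1) + 1)) = 0 := by
        push_cast
        linear_combination (P.br x b) * e -
          (((2 * m : ℕ) : A) + 1) * (P.br (P.br x b) b) * ihm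
      have e3 := nat_cancel (F := F) (Nat.succ_ne_zero s) e2
      have hs2 : n - (m + 1) = s := by omega
      rw [hs2]
      exact e3
  refine ⟨2 * n + 1, ?_⟩
  have := key n le_rfl
  simpa using this

lemma claimC [CharZero F] (P : PoissonBracket F A)
    (hred : ∀ x : A, x * x = 0 → x = 0)
    (V : Submodule F A)
    (hVid : ∀ x ∈ P.lieSpan, ∀ u ∈ V, P.br x u ∈ V)
    (hVZ : ∀ v ∈ V, ∀ w ∈ V, ∀ b : A, P.br (P.br v w) b = 0) :
    ∀ v ∈ V, ∀ a : A, P.br v a = 0 := by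
  intro v hv
  have hv3 : ∀ y : A, P.br v (P.br v (P.br v (P.br v y))) = 0 := by
    intro y
    have h1 : P.br v y ∈ P.lieSpan := Submodule.subset_span ⟨v, y, rfl⟩
    have h2 : P.br v (P.br v y) ∈ V := by
      rw [P.br_skew]
      exact neg_mem (hVid _ h1 v hv)
    have h3 := hVZ v hv _ h2 v
    rw [P.br_skew, h3, neg_zero]
  have step2 : ∀ a : A, P.br v (P.br v a) = 0 := by
    intro a
    have h4 : P.br v (P.br v (P.br v (P.br v (a * a)))) = 0 := hv3 (a * a)
    have h6 : P.br v (P.br v (P.br v (P.br v (P.br v (P.br v (a * a)))))) = 0 := by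
      rw [h4, map_zero, map_zero]
    simp only [br_leib', map_add] at h4 h6
    simp only [hv3, map_zero, mul_zero, zero_mul, add_zero, zero_add] at h4 h6
    have ha3 : P.br v (P.br v (P.br v a)) = 0 := by
      refine hred _ (nat_cancel (F := F) (n := 20) (by norm_num) ?_)
      push_cast
      linear_combination h6
    rw [ha3] at h4
    simp only [mul_zero, zero_mul, add_zero, zero_add] at h4
    refine hred _ (nat_cancel (F := F) (n := 6) (by norm_num) ?_)
    push_cast
    linear_combination h4
  intro a
  have hfin := step2 (a * a)
  simp only [br_leib', map_add] at hfin
  rw [step2 a] at hfin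
  simp only [mul_zero, zero_mul, add_zero, zero_add] at hfin
  refine hred _ (nat_cancel (F := F) (n := 2) (by norm_num) ?_)
  push_cast
  linear_combination hfin

lemma derived_ideal (P : PoissonBracket F A) (U : Submodule F A)
    (hU : P.IsLieIdealOfBrackets U) :
    ∀ i, P.IsLieIdealOfBrackets (P.derived U i) := by
  intro i
  induction i with
  | zero => exact hU
  | succ i ih =>
    constructor
    · refine Submodule.span_le.mpr ?_
      rintro x ⟨u, hu, w, hw, rfl⟩
      exact Submodule.subset_span ⟨u, w, rfl⟩
    · intro x hx u hu
      refine Submodule.span_induction ?_ ?_ ?_ ?_ hu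
      · rintro y ⟨p, hp, q, hq, rfl⟩
        rw [P.jac' x p q]
        exact add_mem
          (Submodule.subset_span ⟨_, ih.2 x hx p hp, q, hq, rfl⟩)
          (Submodule.subset_span ⟨p, hp, _, ih.2 x hx q hq, rfl⟩)
      · rw [map_zero]; exact zero_mem _
      · intro y z _ _ hy hz
        rw [map_add]; exact add_mem hy hz
      · intro c y _ hy
        rw [map_smul]; exact Submodule.smul_mem _ c hy

end PoissonBracket


/-- **Lemma 7.** In a simple Poisson algebra with `1` over a field of characteristic
zero, every ideal `U` of the Lie algebra `{A, A}` with `U^[3] = 0` satisfies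
`{U, A} = 0`. -/
theorem solvable_ideal_brackets_eq_zero [CharZero F] [Nontrivial A]
    (P : PoissonBracket F A) (hP : P.IsSimple) (U : Submodule F A)
    (hU : P.IsLieIdealOfBrackets U) (h3 : P.derived U 3 = ⊥) :
    ∀ u ∈ U, ∀ a : A, P.br u a = 0 := by
  have hseid : ∀ a ∈ nilradical A, ∀ b : A, P.br a b ∈ nilradical A := fun a ha b =>
    mem_nilradical.mpr (seid P b (mem_nilradical.mp ha))
  have hred : ∀ x : A, x * x = 0 → x = 0 := by
    intro x hx
    rcases hP (nilradical A) hseid with h | h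
    · have hx2 : x ∈ nilradical A := mem_nilradical.mpr ⟨2, by rwa [pow_two]⟩
      rw [h] at hx2
      simpa using hx2
    · exfalso
      have h1 : (1 : A) ∈ nilradical A := h ▸ Submodule.mem_top
      obtain ⟨k, hk⟩ := mem_nilradical.mp h1
      simp at hk
  have hd3 : P.derived U 3 = P.brSpan (P.derived U 2) (P.derived U 2) := rfl
  have hd2 : P.derived U 2 = P.brSpan (P.derived U 1) (P.derived U 1) := rfl
  have hd1 : P.derived U 1 = P.brSpan (P.derived U 0) (P.derived U 0) := rfl
  have hid := derived_ideal P U hU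
  have key2 : ∀ v ∈ P.derived U 2, ∀ a : A, P.br v a = 0 := by
    refine claimC P hred _ (hid 2).2 ?_
    intro v hv w hw b
    have hm : P.br v w ∈ P.derived U 3 := by
      rw [hd3]
      exact Submodule.subset_span ⟨v, hv, w, hw, rfl⟩
    rw [h3] at hm
    have hz : P.br v w = 0 := by simpa using hm
    rw [hz]
    exact P.br_zero_left b
  have key1 : ∀ v ∈ P.derived U 1, ∀ a : A, P.br v a = 0 := by
    refine claimC P hred _ (hid 1).2 ?_
    intro v hv w hw b
    refine key2 _ ?_ b
    rw [hd2]
    exact Submodule.subset_span ⟨v, hv, w, hw, rfl⟩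
  refine claimC P hred U hU.2 ?_
  intro v hv w hw b
  refine key1 _ ?_ b
  rw [hd1]
  exact Submodule.subset_span ⟨v, hv, w, hw, rfl⟩
end

section
/- Let A be a Poisson algebra over a field F of characteristic zero and let I be an ideal of the associative algebra A such that {I, {A,A}} ⊆ I. Let √I = {a ∈ A : a^n ∈ I for some n ≥ 1} be the radical of I. Then {√I, {A,A}} ⊆ √I. -/
variable {F A : Type*} [Field F] [CommRing A] [Algebra F A]

open PoissonBracket

lemma nat_cancel_of_mem [CharZero F] (I : Ideal A) {k : ℕ} (hk : k ≠ 0) {w : A}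
    (h : (k : A) * w ∈ I) : w ∈ I := by
  have hk' : (k : F) ≠ 0 := Nat.cast_ne_zero.mpr hk
  have hw : w = algebraMap F A ((k : F)⁻¹) * ((k : A) * w) := by
    rw [← mul_assoc, ← map_natCast (algebraMap F A) k, ← map_mul,
      inv_mul_cancel₀ hk', map_one, one_mul]
  rw [hw]
  exact I.mul_mem_left _ h

/-- If `I` is an ideal of `A` with `{I, {A,A}} ⊆ I`, then its radical `√I`
satisfies `{√I, {A,A}} ⊆ √I` (characteristic zero). -/
theorem radical_stable_under_brackets [CharZero F]
    (P : PoissonBracket F A) (I : Ideal A)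
    (hstable : ∀ u ∈ I, ∀ x ∈ P.lieSpan, P.br u x ∈ I) :
    ∀ u ∈ I.radical, ∀ x ∈ P.lieSpan, P.br u x ∈ I.radical := by
  intro u hu x hx
  obtain ⟨n, hn⟩ := Ideal.mem_radical_iff.mp hu
  have hn' : u ^ (n + 1) ∈ I := by
    rw [pow_succ']
    exact I.mul_mem_left u hn
  -- derivative of powers
  have hpow : ∀ (a : A) (j : ℕ),
      P.br (a ^ (j + 1)) x = ((j : A) + 1) * (a ^ j * P.br a x) := by
    intro a j
    induction j with
    | zero => simp
    | succ j ih =>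
      rw [pow_succ, P.leibniz, ih]
      push_cast
      ring
  set v := P.br u x with hv
  have key : ∀ k, k ≤ n → v ^ (2 * k + 1) * u ^ (n - k) ∈ I := by
    intro k
    induction k with
    | zero =>
      intro _
      have h1 : P.br (u ^ (n + 1)) x ∈ I := hstable _ hn' x hx
      rw [hpow u n] at h1
      have h2 : ((n + 1 : ℕ) : A) * (u ^ n * v) ∈ I := by push_cast; exact h1
      have h3 := nat_cancel_of_mem (F := F) I (Nat.succ_ne_zero n) h2
      simpa [mul_comm] using h3
    | succ k ih =>
      intro hk
      have h1 := ih (Nat.le_of_succ_le hk)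
      set e := n - (k + 1) with he
      have hmk : n - k = e + 1 := by omega
      rw [hmk] at h1
      have h2 : P.br (v ^ (2 * k + 1) * u ^ (e + 1)) x ∈ I := hstable _ h1 x hx
      rw [P.leibniz, hpow u e, hpow v (2 * k)] at h2
      have h3 := I.mul_mem_left v h2
      rw [← hv] at h3
      push_cast at h3
      have hterm : (2 * (k : A) + 1) * ((v ^ (2 * k + 1) * u ^ (e + 1)) * P.br v x) ∈ I := by
        refine I.mul_mem_left _ (I.mul_mem_right _ h1)
      have h4 : ((e : A) + 1) * (v ^ (2 * (k + 1) + 1) * u ^ e)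
          = v * (v ^ (2 * k + 1) * (((e : A) + 1) * (u ^ e * v))
              + (2 * (k : A) + 1) * (v ^ (2 * k) * P.br v x) * u ^ (e + 1))
            - (2 * (k : A) + 1) * ((v ^ (2 * k + 1) * u ^ (e + 1)) * P.br v x) := by
        ring
      have h5 : ((e : A) + 1) * (v ^ (2 * (k + 1) + 1) * u ^ e) ∈ I := by
        rw [h4]; exact sub_mem h3 hterm
      have h6 : ((e + 1 : ℕ) : A) * (v ^ (2 * (k + 1) + 1) * u ^ e) ∈ I := by
        push_cast; exact h5
      have h7 := nat_cancel_of_mem (F := F) I (Nat.succ_ne_zero e) h6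
      simpa [he] using h7
  have hfin := key n le_rfl
  simp only [Nat.sub_self, pow_zero, mul_one] at hfin
  exact Ideal.mem_radical_iff.mpr ⟨2 * n + 1, hfin⟩
end
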